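/- Let λ > 0, γ > 0, Δt > 0 and ρ > 0 with ρΔt ∈ (0, 1). Then there exists a unique pair (E, ζ) of real numbers with E > 0 and ζ > 0 satisfying E/(1−ρΔt) = 2λζ and ζ = (E + γΔt)/(E + γΔt + 2λ); moreover this ζ satisfies ζ ∈ (0, 1). -/

import Mathlib

/-- for `λ, γ, Δt, ρ > 0` with `ρΔt ∈ (0,1)`, there is a unique pair
`(E, ζ)` with `E > 0`, `ζ > 0` satisfying `E/(1−ρΔt) = 2λζ` and
`ζ = (E + γΔt)/(E + γΔt + 2λ)`; moreover this `ζ` satisfies `ζ ∈ (0, 1)`. -/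
theorem stmt15 (lam γ Δt ρ : ℝ) (hlam : 0 < lam) (hγ : 0 < γ) (hΔt : 0 < Δt)
    (hρ : 0 < ρ) (hρΔt : ρ * Δt < 1) :
    (∃! p : ℝ × ℝ, 0 < p.1 ∧ 0 < p.2 ∧
        p.1 / (1 - ρ * Δt) = 2 * lam * p.2 ∧
        p.2 = (p.1 + γ * Δt) / (p.1 + γ * Δt + 2 * lam)) ∧
    (∀ E ζ : ℝ, 0 < E → 0 < ζ →
        E / (1 - ρ * Δt) = 2 * lam * ζ →
        ζ = (E + γ * Δt) / (E + γ * Δt + 2 * lam) →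
        ζ < 1) := by
  have hd : 0 < 1 - ρ * Δt := by linarith
  set d : ℝ := 1 - ρ * Δt with hd_def
  set b : ℝ := γ * Δt + 2 * lam * (ρ * Δt) with hb_def
  set c : ℝ := 2 * lam * d * (γ * Δt) with hc_def
  have hb : 0 < b := by positivity
  have hc : 0 < c := by positivity
  clear_value d b c
  have hsnn : (0:ℝ) ≤ b ^ 2 + 4 * c := by positivity
  set s : ℝ := Real.sqrt (b ^ 2 + 4 * c) with hs_def
  have hs2 : s ^ 2 = b ^ 2 + 4 * c := Real.sq_sqrt hsnn
  have hs0 : 0 ≤ s := Real.sqrt_nonneg _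
  have hsb : b < s := by nlinarith
  set E : ℝ := (s - b) / 2 with hE_def
  have hE : 0 < E := by simp only [hE_def]; linarith
  have hquad : E ^ 2 + b * E - c = 0 := by
    simp only [hE_def]; nlinarith [hs2]
  clear_value E
  clear hE_def hs2 hs0 hsb hs_def hsnn
  clear_value s
  set ζ : ℝ := E / (2 * lam * d) with hζ_def
  have hζ : 0 < ζ := by positivity
  have hD : 0 < E + γ * Δt + 2 * lam := by positivity
  have heq1 : E / d = 2 * lam * ζ := by
    simp only [hζ_def]
    field_simp
  have heq2 : ζ = (E + γ * Δt) / (E + γ * Δt + 2 * lam) := by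
    rw [eq_div_iff (ne_of_gt hD)]
    simp only [hζ_def]
    rw [div_mul_eq_mul_div, div_eq_iff (by positivity : (2 * lam * d) ≠ 0)]
    simp only [hb_def, hc_def, hd_def] at hquad ⊢
    nlinarith [hquad]
  constructor
  · refine ⟨(E, ζ), ⟨hE, hζ, heq1, heq2⟩, ?_⟩
    rintro ⟨E', ζ'⟩ ⟨hE', hζ', h1', h2'⟩
    simp only at hE' hζ' h1' h2' ⊢
    have hD' : 0 < E' + γ * Δt + 2 * lam := by positivity
    have h1'' : E' = 2 * lam * ζ' * d := by
      field_simp at h1'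
      linarith
    have h2'' : ζ' * (E' + γ * Δt + 2 * lam) = E' + γ * Δt := by
      rw [h2']; field_simp
    have hquad' : E' ^ 2 + b * E' - c = 0 := by
      simp only [hb_def, hc_def]
      linear_combination (E' + γ * Δt + 2 * lam) * h1'' + 2 * lam * d * h2''
        + 2 * lam * E' * hd_def
    have hfac : (E' - E) * (E' + E + b) = 0 := by linear_combination hquad' - hquad
    have hEE : E' = E := by
      rcases mul_eq_zero.mp hfac with h | h
      · linarith
      · linarith
    have hζζ : ζ' = ζ := by
      simp only [hζ_def, ← hEE]
      rw [eq_div_iff (by positivity : (2 * lam * d) ≠ 0)]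
      linarith [h1'']
    exact Prod.ext hEE hζζ
  · intro E0 ζ0 hE0 hζ0 h1 h2
    have hD0 : 0 < E0 + γ * Δt + 2 * lam := by positivity
    rw [h2, div_lt_one hD0]
    linarith
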